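/- Let G be a compact metric space, U : G → ℝ continuous with minimizer set Γ, and S : G → ℝ continuous. Suppose V_n : G → ℝ satisfy ‖V_n − S‖_∞ → 0 and φ_n ∈ Γ_n (with Γ_n = {φ : U(φ) ≤ inf_G U + δ_n}, δ_n → 0) satisfy V_n(φ_n) ≤ inf_{Γ_n} V_n + 1/n. Then every subsequential limit φ₀ of (φ_n) lies in Γ, and lim inf inf_{Γ_n} V_n ≥ inf_Γ S; combined with inf_Γ V_n → inf_Γ S, one gets inf_{Γ_n} V_n → inf_Γ S whenever inf_{Γ_n} V_n ≤ inf_Γ V_n. -/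

import Mathlib

noncomputable section

open Filter

theorem stmt_18 {G : Type*} [MetricSpace G] [CompactSpace G] [Nonempty G]
    (U S : G → ℝ) (hU : Continuous U) (hS : Continuous S)
    (V : ℕ → G → ℝ) (hVcont : ∀ n, Continuous (V n))
    (hV : Tendsto (fun n => ⨆ φ : G, |V n φ - S φ|) atTop (nhds 0))
    (δ : ℕ → ℝ) (hδ0 : ∀ n, 0 ≤ δ n) (hδ : Tendsto δ atTop (nhds 0))
    (φn : ℕ → G)
    (hφnΓn : ∀ n, U (φn n) ≤ (⨅ ψ : G, U ψ) + δ n)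
    (hφnmin : ∀ n, V n (φn n)
      ≤ (⨅ φ : { φ : G // U φ ≤ (⨅ ψ : G, U ψ) + δ n }, V n φ.1) + 1 / (n + 1)) :
    (∀ (φ₀ : G) (ρ : ℕ → ℕ), StrictMono ρ →
      Tendsto (fun k => φn (ρ k)) atTop (nhds φ₀) → U φ₀ = ⨅ ψ : G, U ψ) ∧
    (⨅ φ : { φ : G // U φ = ⨅ ψ : G, U ψ }, S φ.1)
      ≤ liminf (fun n => ⨅ φ : { φ : G // U φ ≤ (⨅ ψ : G, U ψ) + δ n }, V n φ.1) atTop ∧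
    ((∀ n, (⨅ φ : { φ : G // U φ ≤ (⨅ ψ : G, U ψ) + δ n }, V n φ.1)
        ≤ ⨅ φ : { φ : G // U φ = ⨅ ψ : G, U ψ }, V n φ.1) →
      Tendsto (fun n => ⨅ φ : { φ : G // U φ ≤ (⨅ ψ : G, U ψ) + δ n }, V n φ.1)
        atTop (nhds (⨅ φ : { φ : G // U φ = ⨅ ψ : G, U ψ }, S φ.1))) := by
  set m := ⨅ ψ : G, U ψ with hm
  -- a global minimizer
  obtain ⟨ψ₀, -, hψ₀⟩ := isCompact_univ.exists_isMinOn Set.univ_nonempty hU.continuousOn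
  have hbddU : BddBelow (Set.range U) := (isCompact_range hU).bddBelow
  have hψ₀m : U ψ₀ = m := le_antisymm (le_ciInf fun ψ => hψ₀ (Set.mem_univ ψ)) (ciInf_le hbddU ψ₀)
  have hmle : ∀ φ : G, m ≤ U φ := fun φ => ciInf_le hbddU φ
  -- set ε n = sup of |V n - S|
  set ε : ℕ → ℝ := fun n => ⨆ φ : G, |V n φ - S φ| with hε
  have hεbd : ∀ n φ, |V n φ - S φ| ≤ ε n := by
    intro n φ
    exact le_ciSup (isCompact_range ((hVcont n).sub hS).abs).bddAbove φ
  -- instances for the subtypes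
  have hΓne : Nonempty { φ : G // U φ = m } := ⟨⟨ψ₀, hψ₀m⟩⟩
  have hΓnne : ∀ n, Nonempty { φ : G // U φ ≤ m + δ n } := fun n =>
    ⟨⟨ψ₀, hψ₀m ▸ le_add_of_nonneg_right (hδ0 n)⟩⟩
  have bddV : ∀ n (p : G → Prop), BddBelow (Set.range fun φ : {φ : G // p φ} => V n φ.1) :=
    fun n p => BddBelow.mono (Set.range_comp_subset_range _ _)
      (isCompact_range (hVcont n)).bddBelow
  have bddS : ∀ (p : G → Prop), BddBelow (Set.range fun φ : {φ : G // p φ} => S φ.1) :=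
    fun p => BddBelow.mono (Set.range_comp_subset_range _ _)
      (isCompact_range hS).bddBelow
  set c := ⨅ φ : { φ : G // U φ = m }, S φ.1 with hc
  -- key argmin continuity lemma
  have key : ∀ e : ℝ, 0 < e → ∃ t : ℝ, 0 < t ∧ ∀ φ : G, U φ ≤ m + t → c - e < S φ := by
    intro e he
    by_contra h
    push_neg at h
    -- nested compact sets
    set F : ℕ → Set G := fun k => {φ | U φ ≤ m + 1 / (k + 1) ∧ S φ ≤ c - e} with hF
    have hFc : ∀ k, IsClosed (F k) := fun k =>
      ((isClosed_le hU continuous_const).inter (isClosed_le hS continuous_const))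
    have hFne : ∀ k, (F k).Nonempty := by
      intro k
      obtain ⟨φ, hφ1, hφ2⟩ := h (1 / (k + 1)) (by positivity)
      exact ⟨φ, hφ1, hφ2⟩
    have hdiv : ∀ i j : ℕ, i ≤ j → (1 : ℝ) / (j + 1) ≤ 1 / (i + 1) := by
      intro i j hij
      gcongr
    have hdir : Directed (· ⊇ ·) F := by
      intro i j
      exact ⟨max i j,
        fun φ hφ => ⟨hφ.1.trans (add_le_add_right (hdiv i _ (le_max_left i j)) m), hφ.2⟩,
        fun φ hφ => ⟨hφ.1.trans (add_le_add_right (hdiv j _ (le_max_right i j)) m), hφ.2⟩⟩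
    have := IsCompact.nonempty_iInter_of_directed_nonempty_isCompact_isClosed F hdir hFne
      (fun k => (hFc k).isCompact) hFc
    obtain ⟨φ, hφ⟩ := this
    simp only [Set.mem_iInter] at hφ
    have hUφ : U φ ≤ m := by
      refine le_of_forall_pos_le_add fun η hη => ?_
      obtain ⟨k, hk⟩ := exists_nat_one_div_lt hη
      exact ((hφ k).1).trans (add_le_add_right hk.le m)
    have hUeq : U φ = m := le_antisymm hUφ (hmle φ)
    have : c ≤ S φ := ciInf_le (bddS _) (⟨φ, hUeq⟩ : { φ : G // U φ = m })
    linarith [(hφ 0).2]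
  -- uniform convergence: eventually ε n < e
  have hεev : ∀ e : ℝ, 0 < e → ∀ᶠ n in atTop, ε n < e := fun e he =>
    hV.eventually (gt_mem_nhds he)
  -- the eventual lower bound on inf over Γn
  have lower : ∀ e : ℝ, 0 < e → ∀ᶠ n in atTop,
      c - e < ⨅ φ : { φ : G // U φ ≤ m + δ n }, V n φ.1 := by
    intro e he
    obtain ⟨t, ht, hkey⟩ := key (e / 2) (by linarith)
    have hδev : ∀ᶠ n in atTop, δ n < t := hδ.eventually (gt_mem_nhds ht)
    filter_upwards [hδev, hεev (e / 2) (by linarith)] with n hδn hεn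
    have : ∀ φ : { φ : G // U φ ≤ m + δ n }, c - e + (e / 2 - ε n) ≤ V n φ.1 := by
      intro φ
      have h1 : c - e / 2 < S φ.1 := hkey φ.1 (φ.2.trans (by linarith))
      have h2 : |V n φ.1 - S φ.1| ≤ ε n := hεbd n φ.1
      rw [abs_le] at h2
      linarith [h2.1]
    have h3 := le_ciInf this
    linarith
  refine ⟨?_, ?_, ?_⟩
  · -- part 1
    intro φ₀ ρ hρ hlim
    refine le_antisymm ?_ (hmle φ₀)
    have h1 : Tendsto (fun k => U (φn (ρ k))) atTop (nhds (U φ₀)) :=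
      (hU.continuousAt.tendsto).comp hlim
    have h2 : Tendsto (fun k => m + δ (ρ k)) atTop (nhds (m + 0)) :=
      tendsto_const_nhds.add (hδ.comp hρ.tendsto_atTop)
    rw [add_zero] at h2
    exact le_of_tendsto_of_tendsto h1 h2 (Eventually.of_forall fun k => hφnΓn (ρ k))
  · -- part 2 : liminf bound
    have hcob : IsCoboundedUnder (· ≥ ·) atTop
        (fun n => ⨅ φ : { φ : G // U φ ≤ m + δ n }, V n φ.1) := by
      apply isCoboundedUnder_ge_of_eventually_le atTop (x := S ψ₀ + 1)
      filter_upwards [hεev 1 one_pos] with n hεn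
      have : (⨅ φ : { φ : G // U φ ≤ m + δ n }, V n φ.1) ≤ V n ψ₀ := by
        exact ciInf_le (bddV n _) ⟨ψ₀, hψ₀m ▸ le_add_of_nonneg_right (hδ0 n)⟩
      have h2 := hεbd n ψ₀
      rw [abs_le] at h2
      linarith [h2.2]
    refine le_of_forall_pos_le_add fun e he => ?_
    have : c - e ≤ liminf (fun n => ⨅ φ : { φ : G // U φ ≤ m + δ n }, V n φ.1) atTop :=
      le_liminf_of_le hcob ((lower e he).mono fun n hn => hn.le)
    linarith
  · -- part 3
    intro hcomp
    rw [Metric.tendsto_atTop]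
    intro e he
    have upper : ∀ᶠ n in atTop,
        (⨅ φ : { φ : G // U φ ≤ m + δ n }, V n φ.1) < c + e := by
      filter_upwards [hεev (e / 2) (by linarith)] with n hεn
      have h1 : (⨅ φ : { φ : G // U φ = m }, V n φ.1) ≤ c + ε n := by
        have : ∀ φ : { φ : G // U φ = m }, (⨅ ψ : { φ : G // U φ = m }, V n ψ.1) - ε n ≤ S φ.1 := by
          intro φ
          have h2 := hεbd n φ.1
          rw [abs_le] at h2
          have h3 : (⨅ ψ : { φ : G // U φ = m }, V n ψ.1) ≤ V n φ.1 := ciInf_le (bddV n _) φ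
          linarith [h2.2]
        have := le_ciInf this
        rw [← hc] at this
        linarith
      calc (⨅ φ : { φ : G // U φ ≤ m + δ n }, V n φ.1)
          ≤ ⨅ φ : { φ : G // U φ = m }, V n φ.1 := hcomp n
        _ ≤ c + ε n := h1
        _ < c + e := by linarith
    rw [eventually_atTop] at upper
    have lower' := lower e he
    rw [eventually_atTop] at lower'
    obtain ⟨N1, hN1⟩ := upper
    obtain ⟨N2, hN2⟩ := lower'
    refine ⟨max N1 N2, fun n hn => ?_⟩
    rw [Real.dist_eq, abs_sub_lt_iff]
    constructor
    · linarith [hN1 n (le_trans (le_max_left _ _) hn)]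
    · linarith [hN2 n (le_trans (le_max_right _ _) hn)]
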